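/- Let G₁ and G₂ be finite simple graphs with nonempty disjoint vertex sets, V(G₁) = {v₁,…,v_{n₁}}. Then θ(G₁ ⊻ G₂) ≥ n₁ + θ(G₂). Moreover, if there exists a permutation π of {1,…,n₁} such that π(i) ≠ i and v_i and v_{π(i)} are not adjacent in G₁ for every i, then θ(G₁ ⊻ G₂) = n₁ + θ(G₂). -/

import Mathlib

open scoped Classical

noncomputable def lovaszTheta {V : Type*} [Fintype V] (G : SimpleGraph V) : ℝ :=
  sSup { x : ℝ | ∃ B : Matrix V V ℝ, B.PosSemidef ∧ B.trace = 1 ∧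
    (∀ i j, G.Adj i j → B i j = 0) ∧ x = ∑ i, ∑ j, B i j }


/-- The non-neighbors-splitting (NNS) join of `G₁` and `G₂`: vertices are the vertices
of `G₁` (first summand), the primed copies of the vertices of `G₁` (second summand),
and the vertices of `G₂` (third summand). -/
def nnsJoin {α β : Type*} (G₁ : SimpleGraph α) (G₂ : SimpleGraph β) :
    SimpleGraph (α ⊕ α ⊕ β) where
  Adj x y :=
    match x, y with
    | .inl u, .inl v => G₁.Adj u v
    | .inl u, .inr (.inl v) => u ≠ v ∧ ¬ G₁.Adj u v
    | .inr (.inl u), .inl v => u ≠ v ∧ ¬ G₁.Adj u v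
    | .inl _, .inr (.inr _) => True
    | .inr (.inr _), .inl _ => True
    | .inr (.inr b), .inr (.inr c) => G₂.Adj b c
    | _, _ => False
  symm := by
    constructor
    rintro (u|u|b) (v|v|c) h
    · exact G₁.adj_symm h
    · obtain ⟨h1, h2⟩ := h; exact ⟨Ne.symm h1, fun a => h2 (G₁.adj_symm a)⟩
    · trivial
    · obtain ⟨h1, h2⟩ := h; exact ⟨Ne.symm h1, fun a => h2 (G₁.adj_symm a)⟩
    · exact h
    · exact h
    · trivial
    · exact h
    · exact G₂.adj_symm h
  loopless := by
    constructor
    rintro (u|u|b) h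
    · exact G₁.irrefl h
    · exact h
    · exact G₂.irrefl h

open scoped MatrixOrder in
theorem Matrix.posSemidef_iff_eq_transpose_mul_self {n : Type*} [Fintype n] {A : Matrix n n ℝ} :
    A.PosSemidef ↔ ∃ B : Matrix n n ℝ, A = B.conjTranspose * B := by
  classical
  refine ⟨fun hA => ?_, fun ⟨B, hB⟩ => hB ▸ Matrix.posSemidef_conjTranspose_mul_self B⟩
  obtain ⟨X, hX, -, hXX⟩ := CFC.exists_sqrt_of_isSelfAdjoint_of_quasispectrumRestricts
    hA.isHermitian (QuasispectrumRestricts.nnreal_of_nonneg hA.nonneg)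
  exact ⟨X, by rw [← hXX]; exact congrArg (· * X) hX.star_eq.symm⟩

namespace ThetaAux
open Matrix

variable {V : Type*} [Fintype V]

def thetaSet (G : SimpleGraph V) : Set ℝ :=
  { x : ℝ | ∃ B : Matrix V V ℝ, B.PosSemidef ∧ B.trace = 1 ∧
    (∀ i j, G.Adj i j → B i j = 0) ∧ x = ∑ i, ∑ j, B i j }

lemma lovasz_eq (G : SimpleGraph V) : lovaszTheta G = sSup (thetaSet G) := rfl

/-- columns of a matrix as Euclidean vectors -/
def col (A : Matrix V V ℝ) (i : V) : EuclideanSpace ℝ V := WithLp.toLp 2 (fun m => A m i)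

lemma inner_col (A : Matrix V V ℝ) (i j : V) :
    (inner ℝ (col A i) (col A j) : ℝ) = (Aᵀ * A) i j := by
  simp [col, PiLp.inner_apply, Matrix.mul_apply, RCLike.inner_apply, mul_comm]

lemma trace_eq (A : Matrix V V ℝ) : (Aᵀ * A).trace = ∑ i, ‖col A i‖ ^ 2 := by
  rw [Matrix.trace]
  refine Finset.sum_congr rfl fun i _ => ?_
  rw [← real_inner_self_eq_norm_sq, inner_col]
  rfl

lemma sumsum_eq (A : Matrix V V ℝ) :
    ∑ i, ∑ j, (Aᵀ * A) i j = ‖∑ i, col A i‖ ^ 2 := by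
  rw [← real_inner_self_eq_norm_sq, sum_inner]
  refine Finset.sum_congr rfl fun i _ => ?_
  rw [inner_sum]
  exact Finset.sum_congr rfl fun j _ => (inner_col A i j).symm

lemma mem_nonneg {G : SimpleGraph V} {x : ℝ} (hx : x ∈ thetaSet G) : 0 ≤ x := by
  obtain ⟨B, hB, -, -, rfl⟩ := hx
  obtain ⟨A, rfl⟩ := Matrix.posSemidef_iff_eq_transpose_mul_self.mp hB
  rw [show Aᴴ = Aᵀ from rfl, sumsum_eq]
  positivity

lemma mem_le_card {G : SimpleGraph V} {x : ℝ} (hx : x ∈ thetaSet G) :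
    x ≤ (Fintype.card V : ℝ) := by
  obtain ⟨B, hB, htr, -, rfl⟩ := hx
  obtain ⟨A, rfl⟩ := Matrix.posSemidef_iff_eq_transpose_mul_self.mp hB
  rw [show Aᴴ = Aᵀ from rfl] at htr ⊢
  rw [sumsum_eq]
  have h1 : ‖∑ i, col A i‖ ≤ ∑ i, ‖col A i‖ := norm_sum_le _ _
  have h2 : (∑ i, ‖col A i‖) ^ 2 ≤ (Fintype.card V : ℝ) * ∑ i, ‖col A i‖ ^ 2 := by
    have := Finset.sum_mul_sq_le_sq_mul_sq Finset.univ (fun i => ‖col A i‖) (fun _ => 1)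
    simpa [Finset.card_univ, mul_comm] using this
  have h3 : ∑ i, ‖col A i‖ ^ 2 = 1 := by rw [← trace_eq, htr]
  calc ‖∑ i, col A i‖ ^ 2 ≤ (∑ i, ‖col A i‖) ^ 2 := by
        apply sq_le_sq' <;> nlinarith [norm_nonneg (∑ i, col A i),
          Finset.sum_nonneg (fun i (_ : i ∈ Finset.univ) => norm_nonneg (col A i))]
    _ ≤ (Fintype.card V : ℝ) * ∑ i, ‖col A i‖ ^ 2 := h2
    _ = (Fintype.card V : ℝ) := by rw [h3, mul_one]

lemma bddAbove_thetaSet (G : SimpleGraph V) : BddAbove (thetaSet G) :=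
  ⟨(Fintype.card V : ℝ), fun _ hx => mem_le_card hx⟩

lemma one_mem [Nonempty V] (G : SimpleGraph V) : (1 : ℝ) ∈ thetaSet G := by
  refine ⟨Matrix.diagonal (Pi.single (Classical.arbitrary V) 1), ?_, ?_, ?_, ?_⟩
  · exact Matrix.posSemidef_diagonal_iff.mpr fun i => by
      simp [Pi.single_apply]; split <;> norm_num
  · simp [Matrix.trace_diagonal]
  · intro i j hij
    exact Matrix.diagonal_apply_ne _ (G.ne_of_adj hij)
  · simp [Matrix.diagonal_apply, Pi.single_apply]

lemma one_le_theta [Nonempty V] (G : SimpleGraph V) : 1 ≤ lovaszTheta G :=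
  le_csSup (bddAbove_thetaSet G) (one_mem G)


lemma sumsum_mul {V W : Type*} [Fintype V] [Fintype W] (M : Matrix W V ℝ) :
    ∑ v, ∑ w, (Mᵀ * M) v w = ∑ m, (∑ v, M m v) ^ 2 := by
  simp only [Matrix.mul_apply, Matrix.transpose_apply]
  have h1 : ∀ v : V, ∑ w : V, ∑ m : W, M m v * M m w = ∑ m : W, ∑ w : V, M m v * M m w :=
    fun v => Finset.sum_comm
  simp_rw [h1]
  rw [Finset.sum_comm]
  refine Finset.sum_congr rfl fun m _ => ?_
  rw [sq, Finset.sum_mul_sum]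

lemma posSemidef_tmul {V W : Type*} [Fintype V] [Fintype W] (M : Matrix W V ℝ) :
    (Mᵀ * M).PosSemidef := by
  have h : Mᴴ = Mᵀ := by ext i j; simp [Matrix.conjTranspose_apply]
  simpa [h] using Matrix.posSemidef_conjTranspose_mul_self M


lemma join_mem {α β : Type*} [Fintype α] [Fintype β]
    (G₁ : SimpleGraph α) (G₂ : SimpleGraph β)
    {B₂ : Matrix β β ℝ} (hPSD : B₂.PosSemidef) (htr : B₂.trace = 1)
    (hz : ∀ i j, G₂.Adj i j → B₂ i j = 0) {t : ℝ} (hts : t = ∑ i, ∑ j, B₂ i j)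
    (ht : 0 < t) :
    ((Fintype.card α : ℝ) + t) ∈ thetaSet (nnsJoin G₁ G₂) := by
  obtain ⟨A, hA⟩ := Matrix.posSemidef_iff_eq_transpose_mul_self.mp hPSD
  have hct : Aᴴ = Aᵀ := by ext i j; simp [Matrix.conjTranspose_apply]
  have hA' : B₂ = Aᵀ * A := by rw [hA, hct]
  set n : ℝ := (Fintype.card α : ℝ) with hn
  have hn0 : 0 ≤ n := Nat.cast_nonneg _
  have hnt : 0 < (n + t) * t := by positivity
  set s : ℝ := Real.sqrt ((n + t) * t) with hs
  have hs0 : 0 < s := Real.sqrt_pos.mpr hnt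
  have hs2 : s ^ 2 = (n + t) * t := Real.sq_sqrt hnt.le
  set M : Matrix β (α ⊕ α ⊕ β) ℝ :=
    fun m v => Sum.elim (fun _ => (0:ℝ))
      (Sum.elim (fun _ => (∑ k, A m k) / s) (fun k => (t / s) * A m k)) v with hM
  have hVt : ∑ m, (∑ k, A m k) ^ 2 = t := by
    rw [hts, hA', sumsum_mul]
  have htrA : ∑ k, ∑ m, A m k * A m k = 1 := by
    rw [← htr, hA']
    simp [Matrix.trace, Matrix.mul_apply, Matrix.diag]
  have hEnt : ∀ k l, ∑ m, A m k * A m l = B₂ k l := by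
    intro k l; rw [hA']; simp [Matrix.mul_apply]
  have hMentry : ∀ v w, (Mᵀ * M) v w = ∑ m, M m v * M m w := by
    intro v w; simp [Matrix.mul_apply]
  refine ⟨Mᵀ * M, posSemidef_tmul M, ?_, ?_, ?_⟩
  · -- trace
    have : (Mᵀ * M).trace = ∑ v, ∑ m, M m v * M m v := by
      simp [Matrix.trace, Matrix.mul_apply, Matrix.diag]
    rw [this, Fintype.sum_sum_type, Fintype.sum_sum_type]
    have e0 : ∀ u : α, ∑ m, M m (Sum.inl u) * M m (Sum.inl u) = 0 := by
      intro u; simp [hM]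
    have e1 : ∀ u : α, ∑ m, M m (Sum.inr (Sum.inl u)) * M m (Sum.inr (Sum.inl u))
        = t / s ^ 2 := by
      intro u
      simp only [hM, Sum.elim_inr, Sum.elim_inl]
      rw [← hVt]
      rw [Finset.sum_div]
      refine Finset.sum_congr rfl fun m _ => ?_
      rw [div_mul_div_comm, sq, sq]
    have e2 : ∑ k, ∑ m, M m (Sum.inr (Sum.inr k)) * M m (Sum.inr (Sum.inr k))
        = t ^ 2 / s ^ 2 := by
      simp only [hM, Sum.elim_inr]
      have : ∀ k, ∑ m, (t / s * A m k) * (t / s * A m k)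
          = (t / s) ^ 2 * ∑ m, A m k * A m k := by
        intro k; rw [Finset.mul_sum]; refine Finset.sum_congr rfl fun m _ => by ring
      simp_rw [this]
      rw [← Finset.mul_sum, htrA, mul_one, div_pow]
    simp only [e0, e1, e2, Finset.sum_const, Finset.card_univ, nsmul_eq_mul,
      Finset.sum_const_zero]
    rw [← hn]
    field_simp
    nlinarith [hs2]
  · -- zeros on adjacency
    rintro (u|u|k) (v|v|l) h <;>
      simp only [hMentry] <;> simp only [hM, Sum.elim_inl, Sum.elim_inr]
    · simp
    · simp
    · simp
    · simp
    · exact h.elim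
    · exact h.elim
    · simp
    · exact h.elim
    · have hG : G₂.Adj k l := h
      have : ∑ m, (t / s * A m k) * (t / s * A m l) = (t/s)^2 * B₂ k l := by
        rw [← hEnt k l, Finset.mul_sum]
        refine Finset.sum_congr rfl fun m _ => by ring
      rw [this, hz k l hG, mul_zero]
  · -- sum value
    rw [sumsum_mul]
    have hrow : ∀ m, ∑ v, M m v = ((n + t) / s) * ∑ k, A m k := by
      intro m
      rw [Fintype.sum_sum_type, Fintype.sum_sum_type]
      simp only [hM, Sum.elim_inl, Sum.elim_inr]
      rw [Finset.sum_const, Finset.sum_const, Finset.card_univ, ← Finset.mul_sum]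
      simp only [smul_zero, zero_add, nsmul_eq_mul, ← hn]
      field_simp
    simp_rw [hrow, mul_pow, ← Finset.mul_sum, hVt, div_pow]
    rw [hs2]
    field_simp


lemma norm_col_sq {V : Type*} [Fintype V] (A : Matrix V V ℝ) (i : V) :
    ‖col A i‖ ^ 2 = (Aᵀ * A) i i := by
  rw [← real_inner_self_eq_norm_sq, inner_col]

lemma theta_lower {α β : Type*} [Fintype α] [Fintype β] [Nonempty α] [Nonempty β]
    (G₁ : SimpleGraph α) (G₂ : SimpleGraph β) :
    (Fintype.card α : ℝ) + lovaszTheta G₂ ≤ lovaszTheta (nnsJoin G₁ G₂) := by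
  have hne : (thetaSet G₂).Nonempty := ⟨1, one_mem G₂⟩
  have key : ∀ y ∈ thetaSet G₂,
      y ≤ lovaszTheta (nnsJoin G₁ G₂) - (Fintype.card α : ℝ) := by
    intro y hy
    rcases lt_or_ge 0 y with h0 | h0
    · obtain ⟨B₂, h1, h2, h3, h4⟩ := hy
      have hmem := join_mem G₁ G₂ h1 h2 h3 h4 h0
      have := le_csSup (bddAbove_thetaSet (nnsJoin G₁ G₂)) hmem
      rw [← lovasz_eq] at this
      linarith
    · obtain ⟨B₂, h1, h2, h3, h4⟩ := one_mem G₂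
      have hmem := join_mem G₁ G₂ h1 h2 h3 h4 one_pos
      have := le_csSup (bddAbove_thetaSet (nnsJoin G₁ G₂)) hmem
      rw [← lovasz_eq] at this
      linarith
  have := csSup_le hne key
  rw [← lovasz_eq] at this
  linarith

set_option maxHeartbeats 2000000 in
lemma theta_upper {α β : Type*} [Fintype α] [Fintype β] [Nonempty α] [Nonempty β]
    (G₁ : SimpleGraph α) (G₂ : SimpleGraph β)
    (π : Equiv.Perm α) (hπ : ∀ v, π v ≠ v ∧ ¬ G₁.Adj v (π v)) :
    lovaszTheta (nnsJoin G₁ G₂) ≤ (Fintype.card α : ℝ) + lovaszTheta G₂ := by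
  rw [lovasz_eq (nnsJoin G₁ G₂)]
  refine csSup_le ⟨1, one_mem _⟩ ?_
  rintro x ⟨B, hPSD, htr, hzero, rfl⟩
  obtain ⟨A, hA⟩ := Matrix.posSemidef_iff_eq_transpose_mul_self.mp hPSD
  have hct : Aᴴ = Aᵀ := by ext i j; simp [Matrix.conjTranspose_apply]
  rw [hA, hct] at htr hzero ⊢
  set f : (α ⊕ α ⊕ β) → EuclideanSpace ℝ (α ⊕ α ⊕ β) := col A with hf
  set n : ℝ := (Fintype.card α : ℝ) with hn
  have hn1 : (1:ℝ) ≤ n := by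
    rw [hn]; exact_mod_cast Fintype.card_pos
  set θ : ℝ := lovaszTheta G₂ with hθ
  have hθ1 : (1:ℝ) ≤ θ := one_le_theta G₂
  set p : ℝ := ∑ u, ‖f (Sum.inl u)‖ ^ 2 with hp
  set r : ℝ := ∑ u, ‖f (Sum.inr (Sum.inl u))‖ ^ 2 with hr
  set q : ℝ := ∑ k, ‖f (Sum.inr (Sum.inr k))‖ ^ 2 with hq
  have hq0 : 0 ≤ q := Finset.sum_nonneg fun _ _ => sq_nonneg _
  have hpr0 : 0 ≤ p + r :=
    add_nonneg (Finset.sum_nonneg fun _ _ => sq_nonneg _)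
      (Finset.sum_nonneg fun _ _ => sq_nonneg _)
  have htr' : p + r + q = 1 := by
    have h1 : ∑ i, ‖f i‖ ^ 2 = 1 := by rw [hf, ← trace_eq, htr]
    rw [Fintype.sum_sum_type, Fintype.sum_sum_type] at h1
    rw [hp, hr, hq]
    linarith
  set Zb := ∑ k, f (Sum.inr (Sum.inr k)) with hZb
  set Wb := ∑ u, (f (Sum.inl u) + f (Sum.inr (Sum.inl (π u)))) with hWb
  have hsum : ∑ i, f i = Wb + Zb := by
    rw [Fintype.sum_sum_type, Fintype.sum_sum_type, hWb, Finset.sum_add_distrib]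
    have hre : ∑ u, f (Sum.inr (Sum.inl (π u))) = ∑ u, f (Sum.inr (Sum.inl u)) :=
      Equiv.sum_comp π (fun u => f (Sum.inr (Sum.inl u)))
    rw [hre, hZb]
    abel
  have hx : ∑ i, ∑ j, (Aᵀ * A) i j = ‖Wb + Zb‖ ^ 2 := by
    rw [sumsum_eq, hsum]
  have hWle : ‖Wb‖ ^ 2 ≤ n * (p + r) := by
    have h1 : ‖Wb‖ ≤ ∑ u, ‖f (Sum.inl u) + f (Sum.inr (Sum.inl (π u)))‖ :=
      norm_sum_le _ _
    have h2 : (∑ u, ‖f (Sum.inl u) + f (Sum.inr (Sum.inl (π u)))‖) ^ 2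
        ≤ n * ∑ u, ‖f (Sum.inl u) + f (Sum.inr (Sum.inl (π u)))‖ ^ 2 := by
      have := Finset.sum_mul_sq_le_sq_mul_sq Finset.univ
        (fun u => ‖f (Sum.inl u) + f (Sum.inr (Sum.inl (π u)))‖) (fun _ => 1)
      simpa [Finset.card_univ, hn, mul_comm] using this
    have h3 : ∑ u, ‖f (Sum.inl u) + f (Sum.inr (Sum.inl (π u)))‖ ^ 2 = p + r := by
      have heach : ∀ u : α, ‖f (Sum.inl u) + f (Sum.inr (Sum.inl (π u)))‖ ^ 2
          = ‖f (Sum.inl u)‖ ^ 2 + ‖f (Sum.inr (Sum.inl (π u)))‖ ^ 2 := by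
        intro u
        have horth : (inner ℝ (f (Sum.inl u)) (f (Sum.inr (Sum.inl (π u)))) : ℝ) = 0 := by
          rw [hf, inner_col]
          exact hzero _ _ ⟨Ne.symm (hπ u).1, (hπ u).2⟩
        rw [norm_add_sq_real, horth]
        ring
      rw [Finset.sum_congr rfl fun u _ => heach u, Finset.sum_add_distrib, hp, hr]
      have hre : ∑ u, ‖f (Sum.inr (Sum.inl (π u)))‖ ^ 2
          = ∑ u, ‖f (Sum.inr (Sum.inl u))‖ ^ 2 :=
        Equiv.sum_comp π (fun u => ‖f (Sum.inr (Sum.inl u))‖ ^ 2)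
      rw [hre]
    nlinarith [norm_nonneg Wb, Finset.sum_nonneg
      (fun u (_ : u ∈ (Finset.univ : Finset α)) =>
        norm_nonneg (f (Sum.inl u) + f (Sum.inr (Sum.inl (π u)))))]
  have hZle : ‖Zb‖ ^ 2 ≤ q * θ := by
    rcases eq_or_lt_of_le hq0 with hq' | hq'
    · have hz0 : ∀ k, f (Sum.inr (Sum.inr k)) = 0 := by
        intro k
        have hsq : ‖f (Sum.inr (Sum.inr k))‖ ^ 2 = 0 := by
          have hle : ‖f (Sum.inr (Sum.inr k))‖ ^ 2 ≤ q := hq ▸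
            Finset.single_le_sum (f := fun k => ‖f (Sum.inr (Sum.inr k))‖ ^ 2)
              (fun _ _ => sq_nonneg _) (Finset.mem_univ k)
          nlinarith [sq_nonneg ‖f (Sum.inr (Sum.inr k))‖]
        have : ‖f (Sum.inr (Sum.inr k))‖ = 0 := by
          nlinarith [norm_nonneg (f (Sum.inr (Sum.inr k)))]
        exact norm_eq_zero.mp this
      have hZ0 : Zb = 0 := by
        rw [hZb]; exact Finset.sum_eq_zero fun k _ => hz0 k
      rw [hZ0]
      simp only [norm_zero]
      rw [zero_pow (two_ne_zero)]
      exact mul_nonneg hq0 (by linarith)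
    · set N : Matrix (α ⊕ α ⊕ β) β ℝ :=
        fun m k => A m (Sum.inr (Sum.inr k)) / Real.sqrt q with hN
      have hNe : ∀ k l, (Nᵀ * N) k l
          = (Aᵀ * A) (Sum.inr (Sum.inr k)) (Sum.inr (Sum.inr l)) / q := by
        intro k l
        simp only [Matrix.mul_apply, Matrix.transpose_apply]; simp only [hN]
        have he : ∀ m, A m (Sum.inr (Sum.inr k)) / Real.sqrt q
            * (A m (Sum.inr (Sum.inr l)) / Real.sqrt q)
            = A m (Sum.inr (Sum.inr k)) * A m (Sum.inr (Sum.inr l)) / q := by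
          intro m
          rw [div_mul_div_comm, Real.mul_self_sqrt hq0]
        simp_rw [he]
        rw [← Finset.sum_div]
      have hmem : ‖Zb‖ ^ 2 / q ∈ thetaSet G₂ := by
        refine ⟨Nᵀ * N, posSemidef_tmul N, ?_, ?_, ?_⟩
        · have hqe : ∑ k, (Aᵀ * A) (Sum.inr (Sum.inr k)) (Sum.inr (Sum.inr k)) = q := by
            rw [hq]
            exact Finset.sum_congr rfl fun k _ => (norm_col_sq A _).symm
          show ∑ k, (Nᵀ * N) k k = 1
          rw [Finset.sum_congr rfl fun k _ => hNe k k, ← Finset.sum_div, hqe,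
            div_self (ne_of_gt hq')]
        · intro k l hkl
          rw [hNe k l, hzero (Sum.inr (Sum.inr k)) (Sum.inr (Sum.inr l)) hkl, zero_div]
        · have e1 : ∑ k, ∑ l, (Nᵀ * N) k l
              = (∑ k, ∑ l, (Aᵀ * A) (Sum.inr (Sum.inr k)) (Sum.inr (Sum.inr l))) / q := by
            rw [Finset.sum_div]
            refine Finset.sum_congr rfl fun k _ => ?_
            rw [Finset.sum_div]
            exact Finset.sum_congr rfl fun l _ => hNe k l
          have e2 : ∑ k, ∑ l, (Aᵀ * A) (Sum.inr (Sum.inr k)) (Sum.inr (Sum.inr l))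
              = ‖Zb‖ ^ 2 := by
            rw [← real_inner_self_eq_norm_sq, hZb, sum_inner]
            refine Finset.sum_congr rfl fun k _ => ?_
            rw [inner_sum]
            exact Finset.sum_congr rfl fun l _ => (inner_col A _ _).symm
          rw [e1, e2]
      have hle := le_csSup (bddAbove_thetaSet G₂) hmem
      rw [← lovasz_eq, ← hθ] at hle
      rw [div_le_iff₀ hq'] at hle
      linarith [hle]
  rw [hx]
  have ha := norm_nonneg Wb
  have hb := norm_nonneg Zb
  have hab : ‖Wb + Zb‖ ≤ ‖Wb‖ + ‖Zb‖ := norm_add_le _ _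
  have hc := norm_nonneg (Wb + Zb)
  have hn0 : (0:ℝ) < n := by linarith
  have hθ0 : (0:ℝ) < θ := by linarith
  have hcc : ‖Wb + Zb‖ ^ 2 ≤ (‖Wb‖ + ‖Zb‖) ^ 2 := by nlinarith
  have hnθ : (0:ℝ) < n * θ := mul_pos hn0 hθ0
  have h1 : 2 * (‖Wb‖ * ‖Zb‖) * (n * θ) ≤ ‖Wb‖ ^ 2 * θ ^ 2 + ‖Zb‖ ^ 2 * n ^ 2 := by
    nlinarith [sq_nonneg (‖Wb‖ * θ - ‖Zb‖ * n)]
  have h2 : ‖Wb‖ ^ 2 * (θ * (n + θ)) ≤ n * (p + r) * (θ * (n + θ)) :=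
    mul_le_mul_of_nonneg_right hWle (by positivity)
  have h3 : ‖Zb‖ ^ 2 * (n * (n + θ)) ≤ q * θ * (n * (n + θ)) :=
    mul_le_mul_of_nonneg_right hZle (by positivity)
  have h5 : (p + r + q) * (n ^ 2 * θ) = n ^ 2 * θ := by rw [htr']; ring
  have h6 : (p + r + q) * (n * θ ^ 2) = n * θ ^ 2 := by rw [htr']; ring
  have h4 : (‖Wb‖ + ‖Zb‖) ^ 2 * (n * θ) ≤ (n + θ) * (n * θ) := by
    nlinarith [h1, h2, h3, h5, h6]
  have key : (‖Wb‖ + ‖Zb‖) ^ 2 ≤ n + θ := le_of_mul_le_mul_right h4 hnθ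
  linarith

end ThetaAux

theorem stmt9 {α β : Type*} [Fintype α] [Fintype β] [Nonempty α] [Nonempty β]
    (G₁ : SimpleGraph α) (G₂ : SimpleGraph β) :
    (Fintype.card α : ℝ) + lovaszTheta G₂ ≤ lovaszTheta (nnsJoin G₁ G₂) ∧
    ((∃ π : Equiv.Perm α, ∀ v, π v ≠ v ∧ ¬ G₁.Adj v (π v)) →
      lovaszTheta (nnsJoin G₁ G₂) = (Fintype.card α : ℝ) + lovaszTheta G₂) := by
  refine ⟨ThetaAux.theta_lower G₁ G₂, ?_⟩
  rintro ⟨π, hπ⟩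
  exact le_antisymm (ThetaAux.theta_upper G₁ G₂ π hπ) (ThetaAux.theta_lower G₁ G₂)
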